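/- With I and J as in the happy-pair removal rule, for every stable matching μ' of J, μ = μ' ∪ {(m_h, w_h)} is a stable matching of I with balance_I(μ) = balance_J(μ'). -/
import Mathlib


open scoped Classical

/-- A Stable Marriage instance: `acc` is the mutual acceptability relation,
`pm m w` is man `m`'s preference value for woman `w` (lower = better),
`pw w m` is woman `w`'s preference value for man `m`. -/
structure SMInst (M W : Type*) where
  acc : M → W → Prop
  pm : M → W → ℕ
  pw : W → M → ℕ

namespace SMInst

variable {M W : Type*} (I : SMInst M W)

/-- A matching, encoded as a relation: matched pairs are acceptable and
each person appears in at most one pair. -/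
def IsMatching (r : M → W → Prop) : Prop :=
  (∀ m w, r m w → I.acc m w) ∧
  (∀ m w w', r m w → r m w' → w = w') ∧
  (∀ m m' w, r m w → r m' w → m = m')

/-- `m` is matched by `r`. -/
def MMatched (r : M → W → Prop) (m : M) : Prop := ∃ w, r m w

/-- `w` is matched by `r`. -/
def WMatched (r : M → W → Prop) (w : W) : Prop := ∃ m, r m w

/-- `(m, w)` blocks `r`: the pair is acceptable, `m` is unmatched or prefers `w`
to his partner, and `w` is unmatched or prefers `m` to her partner. -/
def Blocks (r : M → W → Prop) (m : M) (w : W) : Prop :=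
  I.acc m w ∧
  (∀ w', r m w' → I.pm m w < I.pm m w') ∧
  (∀ m', r m' w → I.pw w m < I.pw w m')

/-- A stable matching: a matching with no blocking pair. -/
def IsStable (r : M → W → Prop) : Prop :=
  I.IsMatching r ∧ ∀ m w, ¬ I.Blocks r m w

/-- Sum of the men's preference values over the pairs of a matching. -/
noncomputable def sumM [Fintype M] [Fintype W] (r : M → W → Prop) : ℕ :=
  ∑ p ∈ Finset.univ.filter (fun p : M × W => r p.1 p.2), I.pm p.1 p.2

/-- Sum of the women's preference values over the pairs of a matching. -/
noncomputable def sumW [Fintype M] [Fintype W] (r : M → W → Prop) : ℕ :=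
  ∑ p ∈ Finset.univ.filter (fun p : M × W => r p.1 p.2), I.pw p.2 p.1

/-- Balance of a matching. -/
noncomputable def bal [Fintype M] [Fintype W] (r : M → W → Prop) : ℕ :=
  max (I.sumM r) (I.sumW r)

/-- Blocking pair for a perfect matching given as an equivalence `M ≃ W`. -/
def BlocksE (e : M ≃ W) (m : M) (w : W) : Prop :=
  I.acc m w ∧ I.pm m w < I.pm m (e m) ∧ I.pw w m < I.pw w (e.symm w)

/-- A stable perfect matching: all matched pairs acceptable, no blocking pair. -/
def IsStableE (e : M ≃ W) : Prop :=
  (∀ m, I.acc m (e m)) ∧ ∀ m w, ¬ I.BlocksE e m w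

/-- Sum of the men's preference values in a perfect matching. -/
def sumME [Fintype M] (e : M ≃ W) : ℕ := ∑ m, I.pm m (e m)

/-- Sum of the women's preference values in a perfect matching. -/
def sumWE [Fintype W] (e : M ≃ W) : ℕ := ∑ w, I.pw w (e.symm w)

/-- Balance of a perfect matching. -/
def balE [Fintype M] [Fintype W] (e : M ≃ W) : ℕ := max (I.sumME e) (I.sumWE e)

end SMInst

/-- Happy-pair removal, reverse direction. If μ' is a stable
(perfect) matching of the reduced instance J, then μ = μ' ∪ {(m_h, w_h)} is a
stable matching of I with balance_I(μ) = balance_J(μ'). -/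
theorem happy_pair_removal_backward {M W : Type*} [Fintype M] [Fintype W]
    (I : SMInst M W) (m_h m_s : M) (w_h w_s : W)
    (hms : m_s ≠ m_h) (hws : w_s ≠ w_h)
    (haccmh : ∀ w, I.acc m_h w ↔ w = w_h)
    (haccwh : ∀ m, I.acc m w_h ↔ m = m_h)
    (hacchh : I.acc m_h w_h)
    (J : SMInst {m : M // m ≠ m_h} {w : W // w ≠ w_h})
    (hJacc : ∀ m w, J.acc m w ↔ I.acc m.1 w.1)
    (hJpm : ∀ m w, J.pm m w =
      if m.1 = m_s then I.pm m.1 w.1 + I.pm m_h w_h else I.pm m.1 w.1)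
    (hJpw : ∀ w m, J.pw w m =
      if w.1 = w_s then I.pw w.1 m.1 + I.pw w_h m_h else I.pw w.1 m.1)
    (μ' : {m : M // m ≠ m_h} → {w : W // w ≠ w_h} → Prop) (hst : J.IsStable μ')
    (hperfM : ∀ m, SMInst.MMatched μ' m) (hperfW : ∀ w, SMInst.WMatched μ' w) :
    I.IsStable (fun m w => (m = m_h ∧ w = w_h) ∨
      ∃ (hm : m ≠ m_h) (hw : w ≠ w_h), μ' ⟨m, hm⟩ ⟨w, hw⟩) ∧
    I.bal (fun m w => (m = m_h ∧ w = w_h) ∨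
      ∃ (hm : m ≠ m_h) (hw : w ≠ w_h), μ' ⟨m, hm⟩ ⟨w, hw⟩) = J.bal μ' := by
  classical
  set r : M → W → Prop := fun m w => (m = m_h ∧ w = w_h) ∨
      ∃ (hm : m ≠ m_h) (hw : w ≠ w_h), μ' ⟨m, hm⟩ ⟨w, hw⟩ with hrdef
  have hstable : I.IsStable r := by
    refine ⟨⟨?_, ?_, ?_⟩, ?_⟩
    · rintro m w (⟨rfl, rfl⟩ | ⟨hm, hw, h⟩)
      · exact hacchh
      · exact (hJacc _ _).1 (hst.1.1 _ _ h)
    · rintro m w w' (⟨hm1, hw1⟩ | ⟨hm, hw, h⟩) (⟨hm2, hw2⟩ | ⟨hm', hw', h'⟩)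
      · rw [hw1, hw2]
      · exact absurd hm1 hm'
      · exact absurd hm2 hm
      · exact Subtype.ext_iff.1 (hst.1.2.1 _ _ _ h h')
    · rintro m m' w (⟨hm1, hw1⟩ | ⟨hm, hw, h⟩) (⟨hm2, hw2⟩ | ⟨hm', hw', h'⟩)
      · rw [hm1, hm2]
      · exact absurd hw1 hw'
      · exact absurd hw2 hw
      · exact Subtype.ext_iff.1 (hst.1.2.2 _ _ _ h h')
    · rintro m w ⟨hacc, hbm, hbw⟩
      by_cases hm : m = m_h
      · have hw : w = w_h := (haccmh w).1 (hm ▸ hacc)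
        have h1 := hbm w_h (Or.inl ⟨hm, rfl⟩)
        rw [hw] at h1
        exact lt_irrefl _ h1
      by_cases hw : w = w_h
      · subst hw; exact hm ((haccwh m).1 hacc)
      refine hst.2 ⟨m, hm⟩ ⟨w, hw⟩ ⟨(hJacc _ _).2 hacc, ?_, ?_⟩
      · intro w' h'
        have h1 : I.pm m w < I.pm m w'.1 :=
          hbm w'.1 (Or.inr ⟨hm, w'.2, by simpa using h'⟩)
        rw [hJpm, hJpm]
        dsimp only
        split_ifs <;> omega
      · intro m' h'
        have h1 : I.pw w m < I.pw w m'.1 :=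
          hbw m'.1 (Or.inr ⟨m'.2, hw, by simpa using h'⟩)
        rw [hJpw, hJpw]
        dsimp only
        split_ifs <;> omega
  refine ⟨hstable, ?_⟩
  -- balance equality
  set S' : Finset ({m : M // m ≠ m_h} × {w : W // w ≠ w_h}) :=
    Finset.univ.filter (fun p => μ' p.1 p.2) with hS'
  have hinj : Set.InjOn (fun p : {m : M // m ≠ m_h} × {w : W // w ≠ w_h} =>
      (p.1.1, p.2.1)) S' := by
    intro p _ q _ h
    ext
    · exact congrArg Prod.fst h
    · exact congrArg Prod.snd h
  have hkeymem : ∀ p : M × W, r p.1 p.2 ↔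
      p ∈ insert (m_h, w_h) (S'.image (fun p => (p.1.1, p.2.1))) := by
    rintro ⟨m, w⟩
    simp only [Finset.mem_insert, Finset.mem_image, hS', Finset.mem_filter,
      Finset.mem_univ, true_and, Prod.mk.injEq, hrdef]
    constructor
    · rintro (⟨rfl, rfl⟩ | ⟨hm, hw, h⟩)
      · exact Or.inl ⟨rfl, rfl⟩
      · exact Or.inr ⟨(⟨m, hm⟩, ⟨w, hw⟩), h, rfl, rfl⟩
    · rintro (⟨rfl, rfl⟩ | ⟨⟨m', w'⟩, h, rfl, rfl⟩)
      · exact Or.inl ⟨rfl, rfl⟩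
      · exact Or.inr ⟨m'.2, w'.2, by simpa using h⟩
  have hnotmem : (m_h, w_h) ∉ S'.image
      (fun p : {m : M // m ≠ m_h} × {w : W // w ≠ w_h} => (p.1.1, p.2.1)) := by
    intro hmem
    obtain ⟨p, -, h⟩ := Finset.mem_image.1 hmem
    exact p.1.2 (congrArg Prod.fst h)
  -- unique pair containing m_s
  obtain ⟨ws', hws'⟩ := hperfM ⟨m_s, hms⟩
  have hfM : S'.filter (fun p => p.1.1 = m_s) = {(⟨m_s, hms⟩, ws')} := by
    ext ⟨m', w'⟩
    simp only [Finset.mem_filter, Finset.mem_singleton, hS', Finset.mem_univ,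
      true_and, Prod.mk.injEq]
    constructor
    · rintro ⟨h, hm'⟩
      have hm2 : m' = ⟨m_s, hms⟩ := Subtype.ext hm'
      subst hm2
      exact ⟨rfl, hst.1.2.1 _ _ _ h hws'⟩
    · rintro ⟨rfl, rfl⟩
      exact ⟨hws', rfl⟩
  obtain ⟨ms', hms'⟩ := hperfW ⟨w_s, hws⟩
  have hfW : S'.filter (fun p => p.2.1 = w_s) = {(ms', ⟨w_s, hws⟩)} := by
    ext ⟨m', w'⟩
    simp only [Finset.mem_filter, Finset.mem_singleton, hS', Finset.mem_univ,
      true_and, Prod.mk.injEq]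
    constructor
    · rintro ⟨h, hw'⟩
      have hw2 : w' = ⟨w_s, hws⟩ := Subtype.ext hw'
      subst hw2
      exact ⟨hst.1.2.2 _ _ _ h hms', rfl⟩
    · rintro ⟨rfl, rfl⟩
      exact ⟨hms', rfl⟩
  have hM : I.sumM r = J.sumM μ' := by
    unfold SMInst.sumM
    trans (∑ p ∈ insert (m_h, w_h)
        (S'.image (fun p : {m : M // m ≠ m_h} × {w : W // w ≠ w_h} => (p.1.1, p.2.1))),
        I.pm p.1 p.2)
    · refine Finset.sum_congr ?_ fun _ _ => rfl
      ext p
      simp only [Finset.mem_filter, Finset.mem_univ, true_and]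
      exact hkeymem p
    rw [Finset.sum_insert hnotmem, Finset.sum_image hinj, ← hS']
    have : ∀ p ∈ S', J.pm p.1 p.2
        = I.pm p.1.1 p.2.1 + (if p.1.1 = m_s then I.pm m_h w_h else 0) := by
      intro p _
      rw [hJpm]
      split_ifs <;> simp
    rw [Finset.sum_congr rfl this, Finset.sum_add_distrib, ← Finset.sum_filter,
      hfM, Finset.sum_singleton]
    ring
  have hW : I.sumW r = J.sumW μ' := by
    unfold SMInst.sumW
    trans (∑ p ∈ insert (m_h, w_h)
        (S'.image (fun p : {m : M // m ≠ m_h} × {w : W // w ≠ w_h} => (p.1.1, p.2.1))),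
        I.pw p.2 p.1)
    · refine Finset.sum_congr ?_ fun _ _ => rfl
      ext p
      simp only [Finset.mem_filter, Finset.mem_univ, true_and]
      exact hkeymem p
    rw [Finset.sum_insert hnotmem, Finset.sum_image hinj, ← hS']
    have : ∀ p ∈ S', J.pw p.2 p.1
        = I.pw p.2.1 p.1.1 + (if p.2.1 = w_s then I.pw w_h m_h else 0) := by
      intro p _
      rw [hJpw]
      split_ifs <;> simp
    rw [Finset.sum_congr rfl this, Finset.sum_add_distrib, ← Finset.sum_filter,
      hfW, Finset.sum_singleton]
    ring
  unfold SMInst.bal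
  rw [hM, hW]
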